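/- (Dominating Option, part (iii)) Let G=(V,E_L,E_R) be an achievement positional game and let u,v∈V be such that {u},{v}∉E_L∪E_R and, for every edge e∈E_L∪E_R, u∈e implies v∈e. Then o(G_u^v) ≤_L o(G) ≤_L o(G_v^u). -/

import Mathlib

namespace APG

/-- The two players: Left and Right. -/
inductive Player : Type
  | L : Player
  | R : Player
deriving DecidableEq, Repr

/-- The opponent of a player. -/
def Player.other : Player → Player
  | .L => .R
  | .R => .L

/-- An achievement positional game: a finite vertex set together with the set of
blue edges (Left's winning sets) and the set of red edges (Right's winning sets). -/
structure Game : Type where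
  V : Finset ℕ
  EL : Finset (Finset ℕ)
  ER : Finset (Finset ℕ)

/-- The edges are nonempty subsets of the vertex set. -/
def WellFormed (G : Game) : Prop :=
  (∀ e ∈ G.EL, e ⊆ G.V ∧ e.Nonempty) ∧ (∀ e ∈ G.ER, e ⊆ G.V ∧ e.Nonempty)

/-- The winning sets of a given player. -/
def Game.edges (G : Game) : Player → Finset (Finset ℕ)
  | .L => G.EL
  | .R => G.ER

/-- The player who makes the `i`-th move (0-indexed) when `s` moves first. -/
def mover (s : Player) (i : ℕ) : Player := if i % 2 = 0 then s else s.other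

/-- The set of vertices picked by player `p` along the history `h`
(the chronological list of the moves played so far), when `s` moved first. -/
def picked (s p : Player) (h : List ℕ) : Finset ℕ :=
  ((Finset.range h.length).filter fun i => mover s i = p).image fun i => h.getD i 0

/-- The set `S` of picked vertices fills some edge of `E`. -/
def fills (E : Finset (Finset ℕ)) (S : Finset ℕ) : Prop := ∃ e ∈ E, e ⊆ S

/-- The game is over: some player has picked all the vertices of one of their edges. -/
def ended (G : Game) (s : Player) (h : List ℕ) : Prop :=
  fills G.EL (picked s .L h) ∨ fills G.ER (picked s .R h)

/-- `h` is a legal history: no vertex is picked twice, every picked vertex belongs to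
the board, and no move is made after the game has ended. -/
def ValidHist (G : Game) (s : Player) (h : List ℕ) : Prop :=
  h.Nodup ∧ (∀ x ∈ h, x ∈ G.V) ∧ ∀ k, k < h.length → ¬ ended G s (h.take k)

/-- A strategy: a map assigning to each position (history) a vertex to pick. -/
abbrev Strategy := List ℕ → ℕ

/-- Along `h`, every move of player `p` agrees with the strategy `σ`. -/
def Follows (s p : Player) (σ : Strategy) (h : List ℕ) : Prop :=
  ∀ k, k < h.length → mover s k = p → h.getD k 0 = σ (h.take k)

/-- A finished play: either the game has ended or all vertices have been picked. -/
def Complete (G : Game) (s : Player) (h : List ℕ) : Prop :=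
  ended G s h ∨ h.length = G.V.card

/-- The strategy `σ` of player `p` always suggests a legal move (an unpicked vertex)
whenever the game is not over and it is `p`'s turn. -/
def Legal (G : Game) (s p : Player) (σ : Strategy) : Prop :=
  ∀ h, ValidHist G s h → Follows s p σ h → ¬ ended G s h → h.length < G.V.card →
    mover s h.length = p → σ h ∈ G.V ∧ σ h ∉ h

/-- Player `p` has a winning strategy on `G` when `s` moves first: following it,
every finished play ends with `p` having filled one of their edges (and, the game
having ended right there, the opponent has not filled an edge first). -/
def WinsAs (G : Game) (s p : Player) : Prop :=
  ∃ σ : Strategy, Legal G s p σ ∧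
    ∀ h, ValidHist G s h → Follows s p σ h → Complete G s h →
      fills (G.edges p) (picked s p h)

/-- Player `p` has a non-losing strategy on `G` when `s` moves first: following it,
the opponent never fills one of their edges. -/
def NonLosingAs (G : Game) (s p : Player) : Prop :=
  ∃ σ : Strategy, Legal G s p σ ∧
    ∀ h, ValidHist G s h → Follows s p σ h → Complete G s h →
      ¬ fills (G.edges p.other) (picked s p.other h)

/-- The possible results of the game, for a fixed starting player. -/
inductive Result : Type
  | Lwin : Result
  | draw : Result
  | Rwin : Result
deriving DecidableEq, Repr

/-- The result of `G` with optimal play, when `s` moves first, is `r`: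
a win for a player means that player has a winning strategy, a draw means
both players have non-losing strategies. -/
def resultIs (G : Game) (s : Player) : Result → Prop
  | .Lwin => WinsAs G s .L
  | .Rwin => WinsAs G s .R
  | .draw => NonLosingAs G s .L ∧ NonLosingAs G s .R

/-- An outcome: the pair of results with optimal play
(when Left starts, when Right starts). -/
abbrev Outcome := Result × Result

/-- `G` has outcome `o`. -/
def hasOutcome (G : Game) (o : Outcome) : Prop :=
  resultIs G .L o.1 ∧ resultIs G .R o.2

/-- Numerical value of a result, from Left's point of view:
Right wins < draw < Left wins. -/
def Result.val : Result → ℕ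
  | .Rwin => 0
  | .draw => 1
  | .Lwin => 2

/-- The partial order `≤_L` on outcomes, comparing both components simultaneously
from Left's point of view. -/
def outLE (o o' : Outcome) : Prop := o.1.val ≤ o'.1.val ∧ o.2.val ≤ o'.2.val

def oL : Outcome := (.Lwin, .Lwin)
def oLminus : Outcome := (.Lwin, .draw)
def oN : Outcome := (.Lwin, .Rwin)
def oD : Outcome := (.draw, .draw)
def oRminus : Outcome := (.draw, .Rwin)
def oR : Outcome := (.Rwin, .Rwin)

/-- The updated game `G_u` after Left has picked `u`. -/
def subL (G : Game) (u : ℕ) : Game where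
  V := G.V.erase u
  EL := G.EL.image fun e => e.erase u
  ER := G.ER.filter fun e => u ∉ e

/-- The updated game `G^u` after Right has picked `u`. -/
def subR (G : Game) (u : ℕ) : Game where
  V := G.V.erase u
  EL := G.EL.filter fun e => u ∉ e
  ER := G.ER.image fun e => e.erase u

/-- The updated game `G_u^v` after Left has picked `u` and Right has picked `v`. -/
def updLR (G : Game) (u v : ℕ) : Game where
  V := (G.V.erase u).erase v
  EL := (G.EL.filter fun e => v ∉ e).image fun e => e.erase u
  ER := (G.ER.filter fun e => u ∉ e).image fun e => e.erase v

/-- The disjoint union of two games. -/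
def gunion (G G' : Game) : Game where
  V := G.V ∪ G'.V
  EL := G.EL ∪ G'.EL
  ER := G.ER ∪ G'.ER


/-! ### Auxiliary lemmas -/

section Aux

open Finset in
lemma Player.other_ne (p : Player) : p.other ≠ p := by cases p <;> simp [Player.other]

lemma Player.other_other (p : Player) : p.other.other = p := by cases p <;> rfl

lemma mover_succ (s : Player) (i : ℕ) : mover s (i+1) = (mover s i).other := by
  rcases Nat.mod_two_eq_zero_or_one i with h | h <;>
    simp [mover, h, Nat.add_mod, Player.other_other]

lemma mover_add_two (s : Player) (i : ℕ) : mover s (i+2) = mover s i := by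
  rw [mover_succ, mover_succ, Player.other_other]

lemma picked_nil (s p : Player) : picked s p [] = ∅ := by simp [picked]

lemma picked_concat (s p : Player) (h : List ℕ) (x : ℕ) :
    picked s p (h ++ [x]) =
      if mover s h.length = p then insert x (picked s p h) else picked s p h := by
  classical
  unfold picked
  have hlen : (h ++ [x]).length = h.length + 1 := by simp
  rw [hlen, Finset.range_add_one, Finset.filter_insert]
  have hcong : ((Finset.range h.length).filter fun i => mover s i = p).image
      (fun i => (h ++ [x]).getD i 0) =
      ((Finset.range h.length).filter fun i => mover s i = p).image (fun i => h.getD i 0) := by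
    apply Finset.image_congr
    intro i hi
    simp only [Finset.coe_filter, Set.mem_setOf_eq, Finset.mem_range] at hi
    exact List.getD_append _ _ _ _ hi.1
  have hx : (h ++ [x]).getD h.length 0 = x := by
    rw [List.getD_append_right h [x] 0 h.length (le_refl _)]
    simp
  split
  · rw [Finset.image_insert, hcong, hx]
  · rw [hcong]

lemma picked_subset (s p : Player) (h : List ℕ) : picked s p h ⊆ h.toFinset := by
  intro x hx
  simp only [picked, Finset.mem_image, Finset.mem_filter, Finset.mem_range] at hx
  obtain ⟨i, ⟨hi, -⟩, rfl⟩ := hx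
  rw [List.getD_eq_getElem _ _ hi]
  exact List.mem_toFinset.mpr (List.getElem_mem _)

lemma picked_disjoint {s p q : Player} (hpq : p ≠ q) {h : List ℕ} (hnd : h.Nodup)
    {x : ℕ} (hxp : x ∈ picked s p h) (hxq : x ∈ picked s q h) : False := by
  simp only [picked, Finset.mem_image, Finset.mem_filter, Finset.mem_range] at hxp hxq
  obtain ⟨i, ⟨hi, hip⟩, hxi⟩ := hxp
  obtain ⟨j, ⟨hj, hjq⟩, hxj⟩ := hxq
  rw [List.getD_eq_getElem _ _ hi] at hxi
  rw [List.getD_eq_getElem _ _ hj] at hxj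
  have : i = j := by
    have := List.Nodup.getElem_inj_iff hnd (hi := hi) (hj := hj)
    rw [hxi, hxj] at this
    exact this.mp rfl
  subst this
  exact hpq (hip.symm.trans hjq)

lemma validHist_length_le {G : Game} {s : Player} {h : List ℕ} (hval : ValidHist G s h) :
    h.length ≤ G.V.card := by
  have h1 : h.toFinset ⊆ G.V := fun x hx => hval.2.1 x (List.mem_toFinset.mp hx)
  have h2 : h.toFinset.card = h.length := List.toFinset_card_of_nodup hval.1
  rw [← h2]
  exact Finset.card_le_card h1

lemma validHist_concat {G : Game} {s : Player} {h : List ℕ} {x : ℕ}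
    (hval : ValidHist G s (h ++ [x])) : ValidHist G s h := by
  obtain ⟨hnd, hmem, hend⟩ := hval
  refine ⟨(List.sublist_append_left h [x]).nodup hnd, fun y hy => hmem y (by simp [hy]), ?_⟩
  intro k hk
  have := hend k (by simp; omega)
  rwa [List.take_append_of_le_length (le_of_lt hk)] at this

lemma not_ended_of_concat {G : Game} {s : Player} {h : List ℕ} {x : ℕ}
    (hval : ValidHist G s (h ++ [x])) : ¬ ended G s h := by
  have := hval.2.2 h.length (by simp)
  rwa [List.take_append_of_le_length (le_refl _), List.take_length] at this

lemma follows_concat_inv {s p : Player} {σ : Strategy} {h : List ℕ} {x : ℕ}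
    (hf : Follows s p σ (h ++ [x])) : Follows s p σ h := by
  intro k hk hm
  have := hf k (by simp; omega) hm
  rwa [List.getD_append _ _ _ _ hk, List.take_append_of_le_length (le_of_lt hk)] at this

lemma follows_concat {s p : Player} {σ : Strategy} {h : List ℕ} {x : ℕ}
    (hf : Follows s p σ h) (hx : mover s h.length = p → x = σ h) :
    Follows s p σ (h ++ [x]) := by
  intro k hk hm
  rcases Nat.lt_or_ge k h.length with hk' | hk'
  · rw [List.getD_append _ _ _ _ hk', List.take_append_of_le_length (le_of_lt hk')]
    exact hf k hk' hm
  · have hke : k = h.length := by simp at hk; omega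
    subst hke
    rw [List.getD_append_right h [x] 0 h.length (le_refl _),
      List.take_append_of_le_length (le_refl _), List.take_length]
    simpa using hx hm

lemma validHist_concat_of {G : Game} {s : Player} {h : List ℕ} {x : ℕ}
    (hval : ValidHist G s h) (hnend : ¬ ended G s h) (hxV : x ∈ G.V) (hxh : x ∉ h) :
    ValidHist G s (h ++ [x]) := by
  obtain ⟨hnd, hmem, hend⟩ := hval
  refine ⟨?_, ?_, ?_⟩
  · rw [List.nodup_append]
    refine ⟨hnd, List.nodup_singleton x, ?_⟩
    intro a ha hax
    intro hb hab
    simp only [List.mem_singleton] at hb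
    subst hb
    exact hxh (hab ▸ ha)
  · intro y hy
    rcases List.mem_append.mp hy with hy | hy
    · exact hmem y hy
    · simp at hy; exact hy ▸ hxV
  · intro k hk
    rcases Nat.lt_or_ge k h.length with hk' | hk'
    · rw [List.take_append_of_le_length (le_of_lt hk')]
      exact hend k hk'
    · have hke : k = h.length := by simp at hk; omega
      subst hke
      rwa [List.take_append_of_le_length (le_refl _), List.take_length]

lemma ended_iff (G : Game) (s : Player) (h : List ℕ) (p : Player) :
    ended G s h ↔ fills (G.edges p) (picked s p h) ∨
      fills (G.edges p.other) (picked s p.other h) := by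
  cases p <;> simp [ended, Game.edges, Player.other, or_comm]

lemma fills_mono {E E' : Finset (Finset ℕ)} {S S' : Finset ℕ}
    (hE : E ⊆ E') (hS : S ⊆ S') (h : fills E S) : fills E' S' := by
  obtain ⟨e, he, hes⟩ := h
  exact ⟨e, hE he, hes.trans hS⟩

lemma wf_edges {G : Game} (hG : WellFormed G) (p : Player) :
    ∀ e ∈ G.edges p, e ⊆ G.V ∧ e.Nonempty := by
  cases p
  · exact hG.1
  · exact hG.2

lemma not_both_fills {G : Game} (hG : WellFormed G) {s : Player} {h : List ℕ}
    (hval : ValidHist G s h) (p : Player) :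
    ¬ (fills (G.edges p) (picked s p h) ∧
       fills (G.edges p.other) (picked s p.other h)) := by
  rintro ⟨hp, hq⟩
  rcases List.eq_nil_or_concat h with rfl | ⟨h₀, x, rfl⟩
  · obtain ⟨e, he, hes⟩ := hp
    obtain ⟨-, hne⟩ := wf_edges hG p e he
    rw [picked_nil] at hes
    exact hne.ne_empty (Finset.subset_empty.mp hes)
  · rw [List.concat_eq_append] at hval hp hq
    set m := mover s h₀.length with hm
    have key : ∀ r : Player, r ≠ m →
        fills (G.edges r) (picked s r (h₀ ++ [x])) → False := by
      intro r hr hf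
      rw [picked_concat] at hf
      rw [if_neg (fun hc => hr hc.symm)] at hf
      have : ended G s h₀ := by
        rw [ended_iff G s h₀ r]
        exact Or.inl hf
      exact not_ended_of_concat hval this
    rcases eq_or_ne p m with hpm | hpm
    · exact key p.other (by rw [hpm]; exact Player.other_ne m) hq
    · exact key p hpm hp


open scoped Classical in
/-- The play obtained by letting `σp` (as player `p`) and `σq` (as the other player)
play against each other, truncated after `n` moves. -/
noncomputable def duel (G : Game) (s p : Player) (σp σq : Strategy) : ℕ → List ℕ
  | 0 => []
  | n + 1 =>
    let h := duel G s p σp σq n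
    if Complete G s h then h
    else h ++ [if mover s h.length = p then σp h else σq h]

lemma duel_spec (G : Game) (s p : Player) (σp σq : Strategy)
    (hp : Legal G s p σp) (hq : Legal G s p.other σq) (n : ℕ) :
    ValidHist G s (duel G s p σp σq n) ∧ Follows s p σp (duel G s p σp σq n) ∧
      Follows s p.other σq (duel G s p σp σq n) ∧
      (Complete G s (duel G s p σp σq n) ∨ (duel G s p σp σq n).length = n) := by
  classical
  induction n with
  | zero =>
    have h0 : duel G s p σp σq 0 = [] := rfl
    rw [h0]
    refine ⟨⟨List.nodup_nil, by simp, by simp⟩, ?_, ?_, Or.inr rfl⟩ <;>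
      intro k hk _ <;> simp at hk
  | succ n ih =>
    obtain ⟨hval, hfp, hfq, hlen⟩ := ih
    set h := duel G s p σp σq n with hh
    by_cases hc : Complete G s h
    · have : duel G s p σp σq (n+1) = h := by
        rw [duel]; simp only [← hh]; rw [if_pos hc]
      rw [this]
      exact ⟨hval, hfp, hfq, Or.inl hc⟩
    · have hlen' : h.length = n := hlen.resolve_left hc
      have hnend : ¬ ended G s h := fun he => hc (Or.inl he)
      have hlt : h.length < G.V.card := by
        rcases Nat.lt_or_ge h.length G.V.card with h' | h'
        · exact h'
        · exact absurd (le_antisymm (validHist_length_le hval) h') (fun he => hc (Or.inr he))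
      set x := if mover s h.length = p then σp h else σq h with hx
      have hxgood : x ∈ G.V ∧ x ∉ h := by
        rcases eq_or_ne (mover s h.length) p with hm | hm
        · rw [hx, if_pos hm]; exact hp h hval hfp hnend hlt hm
        · rw [hx, if_neg hm]
          have hm' : mover s h.length = p.other := by
            cases p <;> cases hm' : mover s h.length <;> simp_all [Player.other]
          exact hq h hval hfq hnend hlt hm'
      have hstep : duel G s p σp σq (n+1) = h ++ [x] := by
        rw [duel]; simp only [← hh]; rw [if_neg hc]
      rw [hstep]
      refine ⟨validHist_concat_of hval hnend hxgood.1 hxgood.2, ?_, ?_, Or.inr (by simp [hlen'])⟩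
      · refine follows_concat hfp ?_
        intro hm; rw [hx, if_pos hm]
      · refine follows_concat hfq ?_
        intro hm
        rw [hx, if_neg (by rw [hm]; exact Player.other_ne p)]

lemma exists_duel_play (G : Game) (s p : Player) (σp σq : Strategy)
    (hp : Legal G s p σp) (hq : Legal G s p.other σq) :
    ∃ h, ValidHist G s h ∧ Follows s p σp h ∧ Follows s p.other σq h ∧ Complete G s h := by
  obtain ⟨hval, hfp, hfq, hc⟩ := duel_spec G s p σp σq hp hq G.V.card
  refine ⟨_, hval, hfp, hfq, ?_⟩
  rcases hc with hc | hc
  · exact hc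
  · exact Or.inr hc

lemma winsAs_nonLosing {G : Game} (hG : WellFormed G) {s p : Player}
    (hw : WinsAs G s p) : NonLosingAs G s p := by
  obtain ⟨σ, hleg, hwin⟩ := hw
  refine ⟨σ, hleg, fun h hval hf hc hfill => ?_⟩
  exact not_both_fills hG hval p ⟨hwin h hval hf hc, hfill⟩

lemma wins_nonlose_clash {G : Game} (hG : WellFormed G) {s p : Player}
    (hw : WinsAs G s p) (hnl : NonLosingAs G s p.other) : False := by
  obtain ⟨σp, hlegp, hwin⟩ := hw
  obtain ⟨σq, hlegq, hnl⟩ := hnl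
  obtain ⟨h, hval, hfp, hfq, hc⟩ := exists_duel_play G s p σp σq hlegp hlegq
  have h1 := hwin h hval hfp hc
  have h2 := hnl h hval hfq hc
  rw [Player.other_other] at h2
  exact h2 h1


/-! ### Lifting strategies from the updated game to the original game -/

/-- The history with the two special vertices removed. -/
def strip (u v : ℕ) (h : List ℕ) : List ℕ := h.filter fun x => decide (x ≠ u ∧ x ≠ v)

/-- The number of the two special vertices already picked. -/
def cuv (u v : ℕ) (h : List ℕ) : ℕ :=
  (if u ∈ h then 1 else 0) + (if v ∈ h then 1 else 0)

lemma strip_nil (u v : ℕ) : strip u v [] = [] := rfl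

lemma mem_strip {u v x : ℕ} {h : List ℕ} : x ∈ strip u v h ↔ x ∈ h ∧ x ≠ u ∧ x ≠ v := by
  simp [strip]

lemma strip_concat_mem {u v x : ℕ} (h : List ℕ) (hx : x = u ∨ x = v) :
    strip u v (h ++ [x]) = strip u v h := by
  rcases hx with hx | hx <;> simp [strip, List.filter_append, hx]

lemma strip_concat_not {u v x : ℕ} (h : List ℕ) (hxu : x ≠ u) (hxv : x ≠ v) :
    strip u v (h ++ [x]) = strip u v h ++ [x] := by
  simp [strip, List.filter_append, hxu, hxv]

lemma picked_mono_concat (s r : Player) (h : List ℕ) (x : ℕ) :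
    picked s r h ⊆ picked s r (h ++ [x]) := by
  rw [picked_concat]
  split
  · exact Finset.subset_insert _ _
  · exact subset_rfl

lemma player_eq_or (M p : Player) : M = p ∨ M = p.other := by
  cases M <;> cases p <;> simp [Player.other]

lemma ne_other_self (p : Player) : p ≠ p.other := fun h => Player.other_ne p h.symm

/-- The lifted strategy: answer `u`/`v` by the other one of the two; if the rest of the
board is full, start picking `u`; otherwise follow `τ` on the stripped history. -/
def liftStrat (G : Game) (u v : ℕ) (τ : Strategy) : Strategy := fun h =>
  if u ∈ h ∧ v ∉ h then v
  else if v ∈ h ∧ u ∉ h then u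
  else if G.V ⊆ insert u (insert v h.toFinset) then u
  else τ (strip u v h)

section Lift

variable {G H : Game} {s p : Player} {u v : ℕ} {τ : Strategy}
variable (hG : WellFormed G) (hu : u ∈ G.V) (hv : v ∈ G.V) (huv : u ≠ v)
variable (hHV : H.V = (G.V.erase u).erase v)
variable (hHp : H.edges p = (G.edges p).filter (fun e => v ∉ e))
variable (hHq : H.edges p.other =
    ((G.edges p.other).filter (fun e => u ∉ e)).image (fun e => e.erase v))
variable (hdomq : ∀ e ∈ G.edges p.other, u ∈ e → v ∈ e)
variable (hleg : Legal H s p τ)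
variable (hguar : ∀ h', ValidHist H s h' → Follows s p τ h' → Complete H s h' →
    ¬ fills (H.edges p.other) (picked s p.other h'))

include hHV hu hv huv in
lemma H_card : H.V.card + 2 = G.V.card := by
  have h1 : (G.V.erase u).card + 1 = G.V.card := Finset.card_erase_add_one hu
  have h2 : ((G.V.erase u).erase v).card + 1 = (G.V.erase u).card :=
    Finset.card_erase_add_one (Finset.mem_erase.mpr ⟨fun h => huv h.symm, hv⟩)
  rw [hHV]; omega

include hHV in
lemma mem_H_V {x : ℕ} : x ∈ H.V ↔ x ∈ G.V ∧ x ≠ u ∧ x ≠ v := by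
  rw [hHV]; simp [Finset.mem_erase]; tauto

include hHp hguar in
lemma not_ended_strip {h : List ℕ}
    (hval' : ValidHist H s (strip u v h)) (hfol' : Follows s p τ (strip u v h))
    (hpick : ∀ r, picked s r (strip u v h) = picked s r h \ {u, v})
    (hnend : ¬ ended G s h) : ¬ ended H s (strip u v h) := by
  intro hend
  rcases (ended_iff H s _ p).mp hend with hf | hf
  · apply hnend
    rw [ended_iff G s h p]
    refine Or.inl (fills_mono ?_ ?_ hf)
    · rw [hHp]; exact Finset.filter_subset _ _
    · rw [hpick p]; exact Finset.sdiff_subset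
  · exact hguar _ hval' hfol' (Or.inl hend) hf

/-- The full invariant maintained along any real play following the lifted strategy. -/
def LiftInv (G H : Game) (s p : Player) (u v : ℕ) (τ : Strategy) (h : List ℕ) : Prop :=
  ((strip u v h).length + cuv u v h = h.length) ∧
  (∀ r, picked s r (strip u v h) = picked s r h \ {u, v}) ∧
  Follows s p τ (strip u v h) ∧
  ValidHist H s (strip u v h) ∧
  ((u ∉ h ∧ v ∉ h)
    ∨ (∃ w m, ((w = u ∧ m = v) ∨ (w = v ∧ m = u)) ∧ w ∈ picked s p.other h ∧ m ∉ h ∧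
        1 ≤ h.length ∧ mover s (h.length - 1) = p.other)
    ∨ (u ∈ picked s p h ∧ v ∉ h ∧ 1 ≤ h.length ∧ mover s (h.length - 1) = p ∧
        G.V ⊆ insert v h.toFinset)
    ∨ ((u ∈ picked s p.other h ∧ v ∈ picked s p h) ∨
       (u ∈ picked s p h ∧ v ∈ picked s p.other h)))

include hG hu hv huv hHV hHp hHq hleg hguar in
lemma liftStrat_inv : ∀ h : List ℕ, ValidHist G s h → Follows s p (liftStrat G u v τ) h →
    LiftInv G H s p u v τ h := by
  intro h
  induction h using List.reverseRecOn with
  | nil =>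
    intro _ _
    refine ⟨by simp [strip_nil, cuv], ?_, ?_, ?_, Or.inl (by simp)⟩
    · intro r; simp [strip_nil, picked_nil]
    · intro k hk; simp [strip_nil] at hk
    · exact ⟨by simp [strip_nil], by simp [strip_nil], by simp [strip_nil]⟩
  | append_singleton h x ih =>
    intro hval hfol
    have hvalh := validHist_concat hval
    have hfolh := follows_concat_inv hfol
    obtain ⟨hlen, hpick, hfol', hval', hstate⟩ := ih hvalh hfolh
    have hnend : ¬ ended G s h := not_ended_of_concat hval
    have hxV : x ∈ G.V := hval.2.1 x (by simp)
    have hxh : x ∉ h := by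
      have hnd := hval.1
      rw [List.nodup_append] at hnd
      exact fun hc => hnd.2.2 x hc x (by simp) rfl
    have hlenlt : h.length < G.V.card := by
      have := validHist_length_le hval
      simp at this; omega
    have hmove : mover s h.length = p → x = liftStrat G u v τ h := by
      intro hM
      have := hfol h.length (by simp) hM
      rwa [List.getD_append_right h [x] 0 h.length (le_refl _),
        List.take_append_of_le_length (le_refl _), List.take_length, Nat.sub_self,
        List.getD_cons_zero] at this
    by_cases hxuv : x = u ∨ x = v
    -- Case: the new move is one of the two special vertices.
    · have hS : strip u v (h ++ [x]) = strip u v h := strip_concat_mem h hxuv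
      have hxmem : x ∈ ({u, v} : Finset ℕ) := by
        rcases hxuv with hx | hx <;> simp [hx]
      have hcuv : cuv u v (h ++ [x]) = cuv u v h + 1 := by
        simp only [cuv, List.mem_append, List.mem_singleton]
        rcases hxuv with hx | hx
        · have h1 : u ∉ h := by rw [hx] at hxh; exact hxh
          have h2 : (v ∈ h ∨ v = u) ↔ v ∈ h := or_iff_left (fun hc => huv hc.symm)
          simp [hx, h1, h2]
          try omega
        · have h1 : v ∉ h := by rw [hx] at hxh; exact hxh
          have h2 : (u ∈ h ∨ u = v) ↔ u ∈ h := or_iff_left huv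
          simp [hx, h1, h2]
          try omega
      refine ⟨by rw [hS, hcuv]; simp; omega, ?_, by rw [hS]; exact hfol',
        by rw [hS]; exact hval', ?_⟩
      · intro r
        rw [hS, picked_concat, hpick r]
        split
        · rw [Finset.insert_sdiff_of_mem _ hxmem]
        · rfl
      -- state update
      · rcases hstate with ⟨hA1, hA2⟩ | ⟨w, m, hwm, hwq, hmh, hl1, hmov⟩ |
          ⟨hC1, hC2, hC3, hC4, hC5⟩ | hD
        -- state A
        · rcases player_eq_or (mover s h.length) p with hM | hM
          · -- p moved; must be the endgame branch
            have hx := hmove hM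
            by_cases hfull : G.V ⊆ insert u (insert v h.toFinset)
            · -- endgame branch: x = u, go to state C
              have hlu : liftStrat G u v τ h = u := by
                unfold liftStrat
                rw [if_neg (fun hc => hA1 hc.1), if_neg (fun hc => hA2 hc.1), if_pos hfull]
              rw [hlu] at hx
              obtain rfl := hx.symm
              refine Or.inr (Or.inr (Or.inl ⟨?_, ?_, by simp, ?_, ?_⟩))
              · rw [picked_concat, if_pos hM]; exact Finset.mem_insert_self _ _
              · simp only [List.mem_append, List.mem_singleton, not_or]
                exact ⟨hA2, fun hc => huv hc.symm⟩
              · simp [hM]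
              · intro y hy
                have := hfull hy
                simp only [Finset.mem_insert, List.mem_toFinset, List.toFinset_append] at this ⊢
                rcases this with rfl | rfl | hy'
                · simp
                · simp
                · simp [hy']
            · -- τ branch: impossible since τ plays in H
              exfalso
              have hnfull := hfull
              have hlτ : liftStrat G u v τ h = τ (strip u v h) := by
                unfold liftStrat
                rw [if_neg (fun hc => hA1 hc.1), if_neg (fun hc => hA2 hc.1), if_neg hnfull]
              rw [hlτ] at hx
              have hc0 : cuv u v h = 0 := by simp [cuv, hA1, hA2]
              have hlenS : (strip u v h).length = h.length := by omega
              have hlt' : (strip u v h).length < H.V.card := by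
                obtain ⟨w, hwV, hw⟩ := Finset.not_subset.mp hnfull
                have hwu : w ≠ u := fun hc => hw (by simp [hc])
                have hwv : w ≠ v := fun hc => hw (by simp [hc])
                have hwh : w ∉ h.toFinset := fun hc => hw (by simp [hc])
                have hsub : insert w (insert u (insert v h.toFinset)) ⊆ G.V := by
                  intro y hy
                  simp only [Finset.mem_insert, List.mem_toFinset] at hy
                  rcases hy with rfl | rfl | rfl | hy
                  · exact hwV
                  · exact hu
                  · exact hv
                  · exact hval.2.1 y (by simp [hy])
                have hcard := Finset.card_le_card hsub
                rw [Finset.card_insert_of_notMem (by simp [hwu, hwv, hwh]),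
                  Finset.card_insert_of_notMem (by simp [huv, hA1]),
                  Finset.card_insert_of_notMem (by simp [hA2]),
                  List.toFinset_card_of_nodup hvalh.1] at hcard
                have := H_card hu hv huv hHV
                omega
              have hmov' : mover s (strip u v h).length = p := by rw [hlenS]; exact hM
              have hnendS := not_ended_strip hHp hguar hval' hfol' hpick hnend
              obtain ⟨hτV, -⟩ := hleg _ hval' hfol' hnendS hlt' hmov'
              rw [← hx] at hτV
              rcases hxuv with hx' | hx'
              · exact ((mem_H_V hHV).mp hτV).2.1 hx'
              · exact ((mem_H_V hHV).mp hτV).2.2 hx'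
          · -- the opponent moved: go to state B
            have hM' : mover s h.length = p.other := hM
            refine Or.inr (Or.inl ⟨x, if x = u then v else u, ?_, ?_, ?_, by simp, ?_⟩)
            · rcases hxuv with hx | hx
              · simp [hx]
              · rw [if_neg (fun hc : x = u => huv (hc.symm.trans hx))]
                exact Or.inr ⟨hx, rfl⟩
            · rw [picked_concat, if_pos hM']; exact Finset.mem_insert_self _ _
            · rcases hxuv with hx | hx
              · rw [if_pos hx]
                simp only [List.mem_append, List.mem_singleton, not_or]
                exact ⟨hA2, fun hc => huv ((hc.trans hx).symm)⟩
              · rw [if_neg (fun hc : x = u => huv (hc.symm.trans hx))]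
                simp only [List.mem_append, List.mem_singleton, not_or]
                exact ⟨hA1, fun hc => huv (hc.trans hx)⟩
            · simp [hM']
        -- state B : p answers with the missing one of u, v
        · have hwh : w ∈ h := List.mem_toFinset.mp (picked_subset s p.other h hwq)
          have hM : mover s h.length = p := by
            have h' : h.length = (h.length - 1) + 1 := by omega
            rw [h', mover_succ, hmov, Player.other_other]
          have hx := hmove hM
          unfold liftStrat at hx
          rcases hwm with ⟨hw1, hm1⟩ | ⟨hw1, hm1⟩
          · obtain rfl := hw1.symm
            obtain rfl := hm1.symm
            rw [if_pos ⟨hwh, hmh⟩] at hx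
            obtain rfl := hx.symm
            refine Or.inr (Or.inr (Or.inr (Or.inl ⟨picked_mono_concat s p.other h _ hwq, ?_⟩)))
            rw [picked_concat, if_pos hM]; exact Finset.mem_insert_self _ _
          · obtain rfl := hw1.symm
            obtain rfl := hm1.symm
            rw [if_neg (fun hc => hmh hc.1), if_pos ⟨hwh, hmh⟩] at hx
            obtain rfl := hx.symm
            refine Or.inr (Or.inr (Or.inr (Or.inr ⟨?_, picked_mono_concat s p.other h _ hwq⟩)))
            rw [picked_concat, if_pos hM]; exact Finset.mem_insert_self _ _
        -- state C : the opponent is forced to pick v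
        · have huh : u ∈ h := List.mem_toFinset.mp (picked_subset s p h hC1)
          have hxv : x = v := by
            rcases hxuv with hx | hx
            · exact absurd (by rw [hx]; exact huh) hxh
            · exact hx
          obtain rfl := hxv.symm
          have hM : mover s h.length = p.other := by
            have h' : h.length = (h.length - 1) + 1 := by omega
            rw [h', mover_succ, hC4]
          refine Or.inr (Or.inr (Or.inr (Or.inr ⟨picked_mono_concat s p h _ hC1, ?_⟩)))
          rw [picked_concat, if_pos hM]; exact Finset.mem_insert_self _ _
        -- state D : impossible, both are already picked
        · exfalso
          have hboth : u ∈ h ∧ v ∈ h := by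
            rcases hD with ⟨h1, h2⟩ | ⟨h1, h2⟩ <;>
              exact ⟨List.mem_toFinset.mp (picked_subset s _ h h1),
                List.mem_toFinset.mp (picked_subset s _ h h2)⟩
          rcases hxuv with hx | hx
          · exact hxh (hx ▸ hboth.1)
          · exact hxh (hx ▸ hboth.2)
    -- Case: the new move is an ordinary vertex.
    · push_neg at hxuv
      obtain ⟨hxu, hxv⟩ := hxuv
      have hS : strip u v (h ++ [x]) = strip u v h ++ [x] := strip_concat_not h hxu hxv
      have hcuv : cuv u v (h ++ [x]) = cuv u v h := by
        have h2 : (u ∈ h ∨ u = x) ↔ u ∈ h := or_iff_left (fun hc => hxu hc.symm)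
        have h3 : (v ∈ h ∨ v = x) ↔ v ∈ h := or_iff_left (fun hc => hxv hc.symm)
        simp [cuv, List.mem_append, h2, h3]
      -- rule out states B and C, so that the parity of the stripped history is even
      have hAD : (u ∉ h ∧ v ∉ h) ∨ ((u ∈ h ∧ v ∈ h)) := by
        rcases hstate with ⟨hA1, hA2⟩ | ⟨w, m, hwm, hwq, hmh, hl1, hmov⟩ |
          ⟨hC1, hC2, hC3, hC4, hC5⟩ | hD
        · exact Or.inl ⟨hA1, hA2⟩
        · -- state B: p must answer u or v, contradiction
          exfalso
          have hM : mover s h.length = p := by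
            have h' : h.length = (h.length - 1) + 1 := by omega
            rw [h', mover_succ, hmov, Player.other_other]
          have hwh : w ∈ h := List.mem_toFinset.mp (picked_subset s p.other h hwq)
          have hx := hmove hM
          unfold liftStrat at hx
          rcases hwm with ⟨hw1, hm1⟩ | ⟨hw1, hm1⟩
          · obtain rfl := hw1.symm
            obtain rfl := hm1.symm
            rw [if_pos ⟨hwh, hmh⟩] at hx
            exact hxv hx
          · obtain rfl := hw1.symm
            obtain rfl := hm1.symm
            rw [if_neg (fun hc => hmh hc.1), if_pos ⟨hwh, hmh⟩] at hx
            exact hxu hx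
        · -- state C: the opponent must pick v, contradiction
          exfalso
          have := hC5 hxV
          simp only [Finset.mem_insert, List.mem_toFinset] at this
          rcases this with hc | hc
          · exact hxv hc
          · exact hxh hc
        · refine Or.inr ?_
          rcases hD with ⟨h1, h2⟩ | ⟨h1, h2⟩ <;>
            exact ⟨List.mem_toFinset.mp (picked_subset s _ h h1),
              List.mem_toFinset.mp (picked_subset s _ h h2)⟩
      have hparity : mover s (strip u v h).length = mover s h.length := by
        rcases hAD with ⟨h1, h2⟩ | ⟨h1, h2⟩
        · have hc0 : cuv u v h = 0 := by simp [cuv, h1, h2]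
          have he : (strip u v h).length = h.length := by omega
          rw [he]
        · have hc2 : cuv u v h = 2 := by simp [cuv, h1, h2]
          have hl : (strip u v h).length + 2 = h.length := by omega
          rw [← hl, mover_add_two]
      have hb1 : ¬ (u ∈ h ∧ v ∉ h) := by
        rintro ⟨h1, h2⟩
        rcases hAD with ⟨hA1, hA2⟩ | ⟨hD1, hD2⟩
        · exact hA1 h1
        · exact h2 hD2
      have hb2 : ¬ (v ∈ h ∧ u ∉ h) := by
        rintro ⟨h1, h2⟩
        rcases hAD with ⟨hA1, hA2⟩ | ⟨hD1, hD2⟩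
        · exact hA2 h1
        · exact h2 hD1
      have hτx : mover s h.length = p → x = τ (strip u v h) := by
        intro hM
        have hx := hmove hM
        by_cases hfull : G.V ⊆ insert u (insert v h.toFinset)
        · exfalso
          have hlu : liftStrat G u v τ h = u := by
            unfold liftStrat
            rw [if_neg hb1, if_neg hb2, if_pos hfull]
          rw [hlu] at hx
          exact hxu hx
        · have hlτ : liftStrat G u v τ h = τ (strip u v h) := by
            unfold liftStrat
            rw [if_neg hb1, if_neg hb2, if_neg hfull]
          rw [hlτ] at hx
          exact hx
      refine ⟨by rw [hS, hcuv]; simp; omega, ?_, ?_, ?_, ?_⟩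
      · intro r
        rw [hS, picked_concat, picked_concat, hparity, hpick r]
        split
        · rw [Finset.insert_sdiff_of_notMem _ (by simp [hxu, hxv])]
        · rfl
      · rw [hS]
        refine follows_concat hfol' ?_
        rw [hparity]
        exact hτx
      · rw [hS]
        refine validHist_concat_of hval' (not_ended_strip hHp hguar hval' hfol' hpick hnend) ?_ ?_
        · exact (mem_H_V hHV).mpr ⟨hxV, hxu, hxv⟩
        · exact fun hc => hxh (mem_strip.mp hc).1
      · rcases hAD with ⟨h1, h2⟩ | ⟨h1, h2⟩
        · refine Or.inl ⟨?_, ?_⟩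
          · simp only [List.mem_append, List.mem_singleton, not_or]
            exact ⟨h1, fun hc => hxu hc.symm⟩
          · simp only [List.mem_append, List.mem_singleton, not_or]
            exact ⟨h2, fun hc => hxv hc.symm⟩
        · refine Or.inr (Or.inr (Or.inr ?_))
          rcases hstate with ⟨hA1, hA2⟩ | ⟨w, m, hwm, hwq, hmh, hl1, hmov⟩ |
            ⟨hC1, hC2, hC3, hC4, hC5⟩ | hD
          · exact absurd h1 hA1
          · exfalso
            rcases hwm with ⟨hw1, hm1⟩ | ⟨hw1, hm1⟩
            · exact hmh (hm1 ▸ h2)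
            · exact hmh (hm1 ▸ h1)
          · exact absurd h2 hC2
          · rcases hD with ⟨hd1, hd2⟩ | ⟨hd1, hd2⟩
            · exact Or.inl ⟨picked_mono_concat s _ h x hd1, picked_mono_concat s _ h x hd2⟩
            · exact Or.inr ⟨picked_mono_concat s _ h x hd1, picked_mono_concat s _ h x hd2⟩


include hG hu hv huv hHV hHp hHq hleg hguar in
lemma liftStrat_legal : Legal G s p (liftStrat G u v τ) := by
  intro h hval hfol hnend hlt hM
  obtain ⟨hlen, hpick, hfol', hval', hstate⟩ :=
    liftStrat_inv hG hu hv huv hHV hHp hHq hleg hguar h hval hfol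
  unfold liftStrat
  split_ifs with h1 h2 h3
  · exact ⟨hv, h1.2⟩
  · exact ⟨hu, h2.2⟩
  · -- endgame branch: u is still free
    refine ⟨hu, fun huh => ?_⟩
    have hvh : v ∈ h := by
      by_contra hvh
      exact h1 ⟨huh, hvh⟩
    have : G.V ⊆ h.toFinset := by
      intro y hy
      have := h3 hy
      simp only [Finset.mem_insert] at this
      rcases this with rfl | rfl | hy'
      · exact List.mem_toFinset.mpr huh
      · exact List.mem_toFinset.mpr hvh
      · exact hy'
    have := Finset.card_le_card this
    rw [List.toFinset_card_of_nodup hval.1] at this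
    omega
  · -- τ branch
    have hAD : (u ∉ h ∧ v ∉ h) ∨ (u ∈ h ∧ v ∈ h) := by
      by_cases huh : u ∈ h
      · by_cases hvh : v ∈ h
        · exact Or.inr ⟨huh, hvh⟩
        · exact absurd ⟨huh, hvh⟩ h1
      · by_cases hvh : v ∈ h
        · exact absurd ⟨hvh, huh⟩ h2
        · exact Or.inl ⟨huh, hvh⟩
    have hnendS := not_ended_strip hHp hguar hval' hfol' hpick hnend
    have hcard2 := H_card hu hv huv hHV
    have hlt' : (strip u v h).length < H.V.card := by
      rcases hAD with ⟨hA1, hA2⟩ | ⟨hD1, hD2⟩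
      · have hc0 : cuv u v h = 0 := by simp [cuv, hA1, hA2]
        obtain ⟨w, hwV, hw⟩ := Finset.not_subset.mp h3
        have hwu : w ≠ u := fun hc => hw (by simp [hc])
        have hwv : w ≠ v := fun hc => hw (by simp [hc])
        have hwh : w ∉ h.toFinset := fun hc => hw (by simp [hc])
        have hsub : insert w (insert u (insert v h.toFinset)) ⊆ G.V := by
          intro y hy
          simp only [Finset.mem_insert, List.mem_toFinset] at hy
          rcases hy with rfl | rfl | rfl | hy
          · exact hwV
          · exact hu
          · exact hv
          · exact hval.2.1 y (by simp [hy])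
        have hcard := Finset.card_le_card hsub
        rw [Finset.card_insert_of_notMem (by simp [hwu, hwv, hwh]),
          Finset.card_insert_of_notMem (by simp [huv, hA1]),
          Finset.card_insert_of_notMem (by simp [hA2]),
          List.toFinset_card_of_nodup hval.1] at hcard
        omega
      · have hc2 : cuv u v h = 2 := by simp [cuv, hD1, hD2]
        omega
    have hmov' : mover s (strip u v h).length = p := by
      rcases hAD with ⟨hA1, hA2⟩ | ⟨hD1, hD2⟩
      · have hc0 : cuv u v h = 0 := by simp [cuv, hA1, hA2]
        have he : (strip u v h).length = h.length := by omega
        rw [he]; exact hM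
      · have hc2 : cuv u v h = 2 := by simp [cuv, hD1, hD2]
        have hl : (strip u v h).length + 2 = h.length := by omega
        rw [← hl, mover_add_two] at hM
        exact hM
    obtain ⟨hτV, hτS⟩ := hleg _ hval' hfol' hnendS hlt' hmov'
    obtain ⟨hτG, hτu, hτv⟩ := (mem_H_V hHV).mp hτV
    exact ⟨hτG, fun hc => hτS (mem_strip.mpr ⟨hc, hτu, hτv⟩)⟩

include hG hu hv huv hHV hHp hHq hdomq hleg hguar in
lemma liftStrat_no_qfill : ∀ h, ValidHist G s h → Follows s p (liftStrat G u v τ) h →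
    Complete G s h → ¬ fills (G.edges p.other) (picked s p.other h) := by
  intro h hval hfol hc hfill
  obtain ⟨hlen, hpick, hfol', hval', hstate⟩ :=
    liftStrat_inv hG hu hv huv hHV hHp hHq hleg hguar h hval hfol
  obtain ⟨e, he, hes⟩ := hfill
  -- the opponent never holds both u and v
  have hqboth : ¬ (u ∈ picked s p.other h ∧ v ∈ picked s p.other h) := by
    rintro ⟨hup, hvp⟩
    rcases hstate with ⟨hA1, hA2⟩ | ⟨w, m, hwm, hwq, hmh, hl1, hmov⟩ |
      ⟨hC1, hC2, hC3, hC4, hC5⟩ | hD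
    · exact hA1 (List.mem_toFinset.mp (picked_subset s p.other h hup))
    · rcases hwm with ⟨hw1, hm1⟩ | ⟨hw1, hm1⟩
      · exact hmh (hm1 ▸ List.mem_toFinset.mp (picked_subset s p.other h hvp))
      · exact hmh (hm1 ▸ List.mem_toFinset.mp (picked_subset s p.other h hup))
    · exact hC2 (List.mem_toFinset.mp (picked_subset s p.other h hvp))
    · rcases hD with ⟨hd1, hd2⟩ | ⟨hd1, hd2⟩
      · exact picked_disjoint (ne_other_self p) hval.1 hd2 hvp
      · exact picked_disjoint (ne_other_self p) hval.1 hd1 hup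
  have hue : u ∉ e := by
    intro hue
    exact hqboth ⟨hes hue, hes (hdomq e he hue)⟩
  have he' : e.erase v ∈ H.edges p.other := by
    rw [hHq]
    exact Finset.mem_image_of_mem _ (Finset.mem_filter.mpr ⟨he, hue⟩)
  have hes' : e.erase v ⊆ picked s p.other (strip u v h) := by
    intro y hy
    rw [hpick p.other]
    obtain ⟨hyv, hye⟩ := Finset.mem_erase.mp hy
    refine Finset.mem_sdiff.mpr ⟨hes hye, ?_⟩
    simp only [Finset.mem_insert, Finset.mem_singleton]
    push_neg
    exact ⟨fun hc => hue (hc ▸ hye), hyv⟩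
  have hfillH : fills (H.edges p.other) (picked s p.other (strip u v h)) := ⟨_, he', hes'⟩
  have hendH : ended H s (strip u v h) := (ended_iff H s _ p).mpr (Or.inr hfillH)
  exact hguar _ hval' hfol' (Or.inl hendH) hfillH

include hG hu hv huv hHV hHp hHq hdomq hleg hguar in
lemma liftStrat_wins
    (hwin : ∀ h', ValidHist H s h' → Follows s p τ h' → Complete H s h' →
      fills (H.edges p) (picked s p h')) :
    ∀ h, ValidHist G s h → Follows s p (liftStrat G u v τ) h →
      Complete G s h → fills (G.edges p) (picked s p h) := by
  intro h hval hfol hc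
  obtain ⟨hlen, hpick, hfol', hval', hstate⟩ :=
    liftStrat_inv hG hu hv huv hHV hHp hHq hleg hguar h hval hfol
  rcases hc with hend | hfull
  · rcases (ended_iff G s h p).mp hend with hf | hf
    · exact hf
    · exact absurd hf
        (liftStrat_no_qfill hG hu hv huv hHV hHp hHq hdomq hleg hguar h hval hfol (Or.inl hend))
  · -- the board is full, so the virtual board is full as well
    have htf : h.toFinset = G.V := by
      apply Finset.eq_of_subset_of_card_le
      · intro y hy
        exact hval.2.1 y (List.mem_toFinset.mp hy)
      · rw [List.toFinset_card_of_nodup hval.1, hfull]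
    have huh : u ∈ h := List.mem_toFinset.mp (htf ▸ hu)
    have hvh : v ∈ h := List.mem_toFinset.mp (htf ▸ hv)
    have hc2 : cuv u v h = 2 := by simp [cuv, huh, hvh]
    have hcard2 := H_card hu hv huv hHV
    have hlenS : (strip u v h).length = H.V.card := by omega
    have hcH : Complete H s (strip u v h) := Or.inr hlenS
    have := hwin _ hval' hfol' hcH
    refine fills_mono ?_ ?_ this
    · rw [hHp]; exact Finset.filter_subset _ _
    · rw [hpick p]; exact Finset.sdiff_subset

include hG hu hv huv hHV hHp hHq hdomq in
lemma lift_nonLosing (hH : WellFormed H) (hnl : NonLosingAs H s p) : NonLosingAs G s p := by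
  obtain ⟨τ', hleg', hguar'⟩ := hnl
  exact ⟨liftStrat G u v τ',
    liftStrat_legal hG hu hv huv hHV hHp hHq hleg' hguar',
    liftStrat_no_qfill hG hu hv huv hHV hHp hHq hdomq hleg' hguar'⟩

include hG hu hv huv hHV hHp hHq hdomq in
lemma lift_wins (hH : WellFormed H) (hw : WinsAs H s p) : WinsAs G s p := by
  obtain ⟨τ', hleg', hwin'⟩ := hw
  have hguar' : ∀ h', ValidHist H s h' → Follows s p τ' h' → Complete H s h' →
      ¬ fills (H.edges p.other) (picked s p.other h') := by
    intro h' hval' hfol' hc' hfill'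
    exact not_both_fills hH hval' p ⟨hwin' h' hval' hfol' hc', hfill'⟩
  exact ⟨liftStrat G u v τ',
    liftStrat_legal hG hu hv huv hHV hHp hHq hleg' hguar',
    liftStrat_wins hG hu hv huv hHV hHp hHq hdomq hleg' hguar' hwin'⟩

end Lift


end Aux


/-! ### Facts about the updated game -/

lemma edges_L (G : Game) : G.edges .L = G.EL := rfl
lemma edges_R (G : Game) : G.edges .R = G.ER := rfl

lemma erase_erase_comm (s : Finset ℕ) (a b : ℕ) :
    (s.erase a).erase b = (s.erase b).erase a := by
  ext x; simp only [Finset.mem_erase]; tauto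

lemma filter_image_erase (E : Finset (Finset ℕ)) (a b : ℕ) (hd : ∀ e ∈ E, a ∈ e → b ∈ e) :
    (E.filter fun e => b ∉ e).image (fun e => e.erase a) = E.filter fun e => b ∉ e := by
  have heq : ∀ e ∈ E.filter fun e => b ∉ e, e.erase a = e := by
    intro e he
    obtain ⟨heE, hbe⟩ := Finset.mem_filter.mp he
    exact Finset.erase_eq_of_notMem (fun hc => hbe (hd e heE hc))
  rw [Finset.image_congr (g := id) (fun e he => heq e he), Finset.image_id]

lemma updLR_wf (G : Game) (hG : WellFormed G) (a b : ℕ)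
    (ha : ({a} : Finset ℕ) ∉ G.EL) (hb : ({b} : Finset ℕ) ∉ G.ER) :
    WellFormed (updLR G a b) := by
  constructor
  · intro e' he'
    simp only [updLR, Finset.mem_image, Finset.mem_filter] at he'
    obtain ⟨e, ⟨he, hbe⟩, rfl⟩ := he'
    obtain ⟨hsub, hne⟩ := hG.1 e he
    constructor
    · intro x hx
      obtain ⟨hxa, hxe⟩ := Finset.mem_erase.mp hx
      exact Finset.mem_erase.mpr ⟨fun hc => hbe (hc ▸ hxe),
        Finset.mem_erase.mpr ⟨hxa, hsub hxe⟩⟩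
    · rw [Finset.nonempty_iff_ne_empty]
      intro hc
      rcases (Finset.erase_eq_empty_iff e a).mp hc with rfl | rfl
      · exact hne.ne_empty rfl
      · exact ha he
  · intro e' he'
    simp only [updLR, Finset.mem_image, Finset.mem_filter] at he'
    obtain ⟨e, ⟨he, hae⟩, rfl⟩ := he'
    obtain ⟨hsub, hne⟩ := hG.2 e he
    constructor
    · intro x hx
      obtain ⟨hxb, hxe⟩ := Finset.mem_erase.mp hx
      exact Finset.mem_erase.mpr ⟨hxb,
        Finset.mem_erase.mpr ⟨fun hc => hae (hc ▸ hxe), hsub hxe⟩⟩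
    · rw [Finset.nonempty_iff_ne_empty]
      intro hc
      rcases (Finset.erase_eq_empty_iff e b).mp hc with rfl | rfl
      · exact hne.ne_empty rfl
      · exact hb he

/-- Dominating option, part (iii): if every edge containing `u` also contains `v`,
then `o(G_u^v) ≤_L o(G) ≤_L o(G_v^u)`. -/
theorem dominating_option_iii (G : Game) (hG : WellFormed G) (u v : ℕ)
    (hu : u ∈ G.V) (hv : v ∈ G.V) (huv : u ≠ v)
    (hsu : ({u} : Finset ℕ) ∉ G.EL ∪ G.ER) (hsv : ({v} : Finset ℕ) ∉ G.EL ∪ G.ER)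
    (hdom : ∀ e ∈ G.EL ∪ G.ER, u ∈ e → v ∈ e) :
    (∀ o o' : Outcome, hasOutcome (updLR G u v) o → hasOutcome G o' → outLE o o') ∧
    (∀ o o' : Outcome, hasOutcome G o → hasOutcome (updLR G v u) o' → outLE o o') := by
  simp only [Finset.mem_union] at hsu hsv
  push_neg at hsu hsv
  have hdomL : ∀ e ∈ G.EL, u ∈ e → v ∈ e :=
    fun e he => hdom e (Finset.mem_union_left _ he)
  have hdomR : ∀ e ∈ G.ER, u ∈ e → v ∈ e :=
    fun e he => hdom e (Finset.mem_union_right _ he)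
  set H₁ := updLR G u v with hH₁
  set H₂ := updLR G v u with hH₂
  have hwf1 : WellFormed H₁ := updLR_wf G hG u v hsu.1 hsv.2
  have hwf2 : WellFormed H₂ := updLR_wf G hG v u hsv.1 hsu.2
  -- the data needed to lift Left's strategies from H₁ to G
  have hHV1 : H₁.V = (G.V.erase u).erase v := rfl
  have hHp1 : H₁.edges .L = (G.edges .L).filter (fun e => v ∉ e) := by
    rw [edges_L, edges_L, hH₁]
    exact filter_image_erase G.EL u v hdomL
  have hHq1 : H₁.edges (Player.other .L) =
      ((G.edges (Player.other .L)).filter (fun e => u ∉ e)).image (fun e => e.erase v) := rfl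
  have hdomq1 : ∀ e ∈ G.edges (Player.other .L), u ∈ e → v ∈ e := hdomR
  -- the data needed to lift Right's strategies from H₂ to G
  have hHV2 : H₂.V = (G.V.erase u).erase v := erase_erase_comm G.V v u
  have hHp2 : H₂.edges .R = (G.edges .R).filter (fun e => v ∉ e) := by
    rw [edges_R, edges_R, hH₂]
    exact filter_image_erase G.ER u v hdomR
  have hHq2 : H₂.edges (Player.other .R) =
      ((G.edges (Player.other .R)).filter (fun e => u ∉ e)).image (fun e => e.erase v) := rfl
  have hdomq2 : ∀ e ∈ G.edges (Player.other .R), u ∈ e → v ∈ e := hdomL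
  have liftW1 : ∀ s, WinsAs H₁ s .L → WinsAs G s .L :=
    fun s => lift_wins hG hu hv huv hHV1 hHp1 hHq1 hdomq1 hwf1
  have liftN1 : ∀ s, NonLosingAs H₁ s .L → NonLosingAs G s .L :=
    fun s => lift_nonLosing hG hu hv huv hHV1 hHp1 hHq1 hdomq1 hwf1
  have liftW2 : ∀ s, WinsAs H₂ s .R → WinsAs G s .R :=
    fun s => lift_wins hG hu hv huv hHV2 hHp2 hHq2 hdomq2 hwf2
  have liftN2 : ∀ s, NonLosingAs H₂ s .R → NonLosingAs G s .R :=
    fun s => lift_nonLosing hG hu hv huv hHV2 hHp2 hHq2 hdomq2 hwf2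
  have comp1 : ∀ s (r r' : Result), resultIs H₁ s r → resultIs G s r' →
      r.val ≤ r'.val := by
    intro s r r' hr hr'
    cases r <;> cases r' <;> simp [Result.val] <;> exfalso
    · -- Left wins H₁ but G is a draw
      exact wins_nonlose_clash hG (liftW1 s hr) hr'.2
    · -- Left wins H₁ but Right wins G
      exact wins_nonlose_clash hG (liftW1 s hr) (winsAs_nonLosing hG hr')
    · -- H₁ is a draw but Right wins G
      exact wins_nonlose_clash hG hr' (liftN1 s hr.1)
  have comp2 : ∀ s (r r' : Result), resultIs G s r → resultIs H₂ s r' →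
      r.val ≤ r'.val := by
    intro s r r' hr hr'
    cases r <;> cases r' <;> simp [Result.val] <;> exfalso
    · -- Left wins G but H₂ is a draw
      exact wins_nonlose_clash hG hr (liftN2 s hr'.2)
    · -- Left wins G but Right wins H₂
      exact wins_nonlose_clash hG hr (winsAs_nonLosing hG (liftW2 s hr'))
    · -- G is a draw but Right wins H₂
      exact wins_nonlose_clash hG (liftW2 s hr') hr.1
  constructor
  · rintro ⟨o1, o2⟩ ⟨o1', o2'⟩ ⟨h1, h2⟩ ⟨h1', h2'⟩
    exact ⟨comp1 .L o1 o1' h1 h1', comp1 .R o2 o2' h2 h2'⟩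
  · rintro ⟨o1, o2⟩ ⟨o1', o2'⟩ ⟨h1, h2⟩ ⟨h1', h2'⟩
    exact ⟨comp2 .L o1 o1' h1 h1', comp2 .R o2 o2' h2 h2'⟩
end APG
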